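/- If the multiverse is directed downward from any structure via generic extension and every structure has an infinitely generic extension, then any two infinitely generic structures N₁, N₂ with a common extension Q (Q ≤ N₁ and Q ≤ N₂) satisfy the same sentences with parameters in N₁ ∩ N₂. -/
import Mathlib


namespace Robinson

/-- Formulas built from atoms (which may carry parameters), with conjunction,
disjunction, negation and an existential quantifier whose witnesses range over
a fixed type `W` of potential parameters/elements. -/
inductive Frm (atom : Type) (W : Type) : Type
  | atm : atom → Frm atom W
  | and : Frm atom W → Frm atom W → Frm atom W
  | or  : Frm atom W → Frm atom W → Frm atom W
  | not : Frm atom W → Frm atom W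
  | ex  : (W → Frm atom W) → Frm atom W

/-- A multiverse: a preorder of structures, `le Q N` meaning `Q` extends `N`
(`N` is a substructure of `Q`).  `mem a N` says the element `a` belongs to the
domain of `N` (so elements persist to extensions), and atomic sentences with
parameters in `N` are absolute between `N` and its extensions. -/
structure Multiverse (atom : Type) (W : Type) : Type 1 where
  M : Type
  le : M → M → Prop
  le_refl : ∀ N, le N N
  le_trans : ∀ {P Q R}, le P Q → le Q R → le P R
  satAtom : M → atom → Prop
  mem : W → M → Prop
  mem_mono : ∀ {a : W} {N Q : M}, le Q N → mem a N → mem a Q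
  atom_absolute : ∀ {N Q : M} (p : atom), le Q N → (satAtom N p ↔ satAtom Q p)

variable {atom W : Type}

/-- Robinson's infinite forcing relation on the multiverse. -/
def Forces (V : Multiverse atom W) : Frm atom W → V.M → Prop
  | .atm p, N => V.satAtom N p
  | .and φ ψ, N => Forces V φ N ∧ Forces V ψ N
  | .or φ ψ, N => Forces V φ N ∨ Forces V ψ N
  | .not φ, N => ∀ Q : V.M, V.le Q N → ¬ Forces V φ Q
  | .ex f, N => ∃ a : W, V.mem a N ∧ Forces V (f a) N

/-- Tarskian satisfaction. -/
def Sat (V : Multiverse atom W) : Frm atom W → V.M → Prop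
  | .atm p, N => V.satAtom N p
  | .and φ ψ, N => Sat V φ N ∧ Sat V ψ N
  | .or φ ψ, N => Sat V φ N ∨ Sat V ψ N
  | .not φ, N => ¬ Sat V φ N
  | .ex f, N => ∃ a : W, V.mem a N ∧ Sat V (f a) N

/-- `N` is infinitely generic: it forces every sentence or its negation. -/
def Generic (V : Multiverse atom W) (N : V.M) : Prop :=
  ∀ φ : Frm atom W, Forces V φ N ∨ Forces V (Frm.not φ) N

end Robinson


namespace Robinson

variable {atom W : Type}

/-- Forcing persists to extensions. -/
theorem forces_persist (V : Multiverse atom W) :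
    ∀ (φ : Frm atom W) {N Q : V.M}, V.le Q N → Forces V φ N → Forces V φ Q := by
  intro φ
  induction φ with
  | atm p => intro N Q h hf; exact (V.atom_absolute p h).mp hf
  | and φ ψ ihφ ihψ => intro N Q h hf; exact ⟨ihφ h hf.1, ihψ h hf.2⟩
  | or φ ψ ihφ ihψ =>
      intro N Q h hf
      rcases hf with hf | hf
      · exact Or.inl (ihφ h hf)
      · exact Or.inr (ihψ h hf)
  | not φ ih =>
      intro N Q h hf R hR
      exact hf R (V.le_trans hR h)
  | ex f ih =>
      intro N Q h hf
      rcases hf with ⟨a, ha, hfa⟩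
      exact ⟨a, V.mem_mono h ha, ih a h hfa⟩

/-- For infinitely generic structures, forcing coincides with satisfaction. -/
theorem generic_forces_iff_sat (V : Multiverse atom W) {N : V.M} (hN : Generic V N) :
    ∀ φ : Frm atom W, Forces V φ N ↔ Sat V φ N := by
  intro φ
  induction φ with
  | atm p => exact Iff.rfl
  | and φ ψ ihφ ihψ => exact and_congr ihφ ihψ
  | or φ ψ ihφ ihψ => exact or_congr ihφ ihψ
  | not φ ih =>
      constructor
      · intro hf hs
        exact hf N (V.le_refl N) (ih.mpr hs)
      · intro hs
        rcases hN φ with h | h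
        · exact absurd (ih.mp h) hs
        · exact h
  | ex f ih =>
      constructor
      · rintro ⟨a, ha, hfa⟩; exact ⟨a, ha, (ih a).mp hfa⟩
      · rintro ⟨a, ha, hfa⟩; exact ⟨a, ha, (ih a).mpr hfa⟩

/-- A generic extension of a generic structure forces the same sentences. -/
theorem generic_ext_forces_iff (V : Multiverse atom W) {N Q : V.M}
    (hN : Generic V N) (h : V.le Q N) :
    ∀ φ : Frm atom W, Forces V φ N ↔ Forces V φ Q := by
  intro φ
  constructor
  · exact forces_persist V φ h
  · intro hf
    rcases hN φ with hg | hg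
    · exact hg
    · exact absurd hf (hg Q h)

/-- Two infinitely generic structures with a common extension satisfy the same
sentences, assuming density of infinitely generic structures. -/
theorem generic_common_extension_elem_equiv {atom W : Type} (V : Multiverse atom W)
    (hdense : ∀ P : V.M, ∃ Q : V.M, V.le Q P ∧ Generic V Q)
    {N1 N2 Q : V.M} (h1 : Generic V N1) (h2 : Generic V N2)
    (hq1 : V.le Q N1) (hq2 : V.le Q N2) :
    ∀ phi : Frm atom W, Sat V phi N1 ↔ Sat V phi N2 := by
  intro phi
  obtain ⟨Q', hQ', hgQ'⟩ := hdense Q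
  have l1 : V.le Q' N1 := V.le_trans hQ' hq1
  have l2 : V.le Q' N2 := V.le_trans hQ' hq2
  rw [← generic_forces_iff_sat V h1, ← generic_forces_iff_sat V h2,
    generic_ext_forces_iff V h1 l1, generic_ext_forces_iff V h2 l2]
end Robinson
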